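/- arXiv:1711.05227 — 2 statements merged into one kernel-verified Lean document; each statement's English description precedes it below -/
import Mathlib

section
/- Homomorphisms preserve least fixpoints of constant-free programs: if P is a logic program containing no constants and η is a homomorphism from base instance B to base instance B', then for every i, η(Iᵢ) ⊆ I'ᵢ, where Iᵢ and I'ᵢ are the stages of the fixpoint computation of P on B and B' respectively; hence η(fix(P,B)) ⊆ fix(P,B'), where η is extended to ground terms by applying it to the constants occurring in them. -/
/-- Ground terms over constants `C` and function symbols `F`. -/
inductive GTerm (C F : Type) where
  | const : C → GTerm C F
  | func : F → List (GTerm C F) → GTerm C F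

/-- Terms over variables `V`, constants `C`, and function symbols `F`. -/
inductive Term (V C F : Type) where
  | var : V → Term V C F
  | const : C → Term V C F
  | func : F → List (Term V C F) → Term V C F

def Term.subst {V C F : Type} (σ : V → GTerm C F) : Term V C F → GTerm C F
  | .var v => σ v
  | .const c => .const c
  | .func f ts => .func f (ts.attach.map fun t => t.1.subst σ)
  decreasing_by
    have := List.sizeOf_lt_of_mem t.2
    simp_wf
    omega


def GTerm.mapConst {C F : Type} (η : C → C) : GTerm C F → GTerm C F
  | .const c => .const (η c)
  | .func f ts => .func f (ts.attach.map fun t => t.1.mapConst η)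
  decreasing_by
    have := List.sizeOf_lt_of_mem t.2
    simp_wf
    omega


structure FAtom (P V C F : Type) where
  pred : P
  args : List (Term V C F)

structure FFact (P C F : Type) where
  pred : P
  args : List (GTerm C F)

structure FRule (P V C F : Type) where
  head : FAtom P V C F
  body : List (FAtom P V C F)

def FAtom.subst {P V C F : Type} (σ : V → GTerm C F) (A : FAtom P V C F) : FFact P C F :=
  ⟨A.pred, A.args.map (Term.subst σ)⟩

def FTP {P V C F : Type} (Prog : Set (FRule P V C F)) (I : Set (FFact P C F)) :
    Set (FFact P C F) :=
  I ∪ {G | ∃ r ∈ Prog, ∃ σ : V → GTerm C F, (∀ A ∈ r.body, A.subst σ ∈ I) ∧ G = r.head.subst σ}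

def fstages {P V C F : Type} (Prog : Set (FRule P V C F)) (B : Set (FFact P C F)) :
    ℕ → Set (FFact P C F)
  | 0 => B
  | n + 1 => FTP Prog (fstages Prog B n)

def flfix {P V C F : Type} (Prog : Set (FRule P V C F)) (B : Set (FFact P C F)) :
    Set (FFact P C F) :=
  ⋃ n, fstages Prog B n

inductive Term.HasConst {V C F : Type} : Term V C F → Prop
  | const (c : C) : HasConst (.const c)
  | func {f : F} {ts : List (Term V C F)} {t : Term V C F} :
      t ∈ ts → HasConst t → HasConst (.func f ts)

def Term.FuncFree {V C F : Type} : Term V C F → Prop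
  | .func _ _ => False
  | _ => True

inductive VarOccurs {V C F : Type} (v : V) : Term V C F → Prop
  | var : VarOccurs v (.var v)
  | func {f : F} {ts : List (Term V C F)} {t : Term V C F} :
      t ∈ ts → VarOccurs v t → VarOccurs v (.func f ts)

def GTerm.depth {C F : Type} : GTerm C F → ℕ
  | .const _ => 0
  | .func _ ts => (ts.attach.map fun t => t.1.depth).foldr max 0 + 1
  decreasing_by
    have := List.sizeOf_lt_of_mem t.2
    simp_wf
    omega


def FFact.depth {P C F : Type} (G : FFact P C F) : ℕ :=
  (G.args.map GTerm.depth).foldr max 0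

inductive Subterm {C F : Type} : GTerm C F → GTerm C F → Prop
  | refl (t : GTerm C F) : Subterm t t
  | func {s t : GTerm C F} {f : F} {ts : List (GTerm C F)} :
      t ∈ ts → Subterm s t → Subterm s (.func f ts)

/-- Apply a map on constants to a fact. -/
def FFact.mapConst {P C F : Type} (η : C → C) (G : FFact P C F) : FFact P C F :=
  ⟨G.pred, G.args.map (GTerm.mapConst η)⟩

theorem subst_mapConst {V C F : Type} (eta : C → C) (sig : V → GTerm C F) :
    ∀ t : Term V C F, ¬ t.HasConst →
      (t.subst sig).mapConst eta = t.subst (fun v => (sig v).mapConst eta) := by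
  intro t
  induction t using Term.subst.induct with
  | case1 v => intro _; simp [Term.subst]
  | case2 c => intro h; exact absurd (Term.HasConst.const c) h
  | case3 f ts ih =>
    intro h
    simp only [Term.subst, GTerm.mapConst, List.attach_map_val, List.map_map]
    congr 1
    refine List.map_congr_left ?_
    intro t ht
    exact ih ⟨t, ht⟩ (fun hc => h (Term.HasConst.func ht hc))

theorem atom_subst_mapConst {P V C F : Type} (eta : C → C) (sig : V → GTerm C F)
    (A : FAtom P V C F) (h : ∀ t ∈ A.args, ¬ t.HasConst) :
    (A.subst sig).mapConst eta = A.subst (fun v => (sig v).mapConst eta) := by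
  simp only [FAtom.subst, FFact.mapConst, List.map_map]
  congr 1
  exact List.map_congr_left fun t ht => subst_mapConst eta sig t (h t ht)

/-- if the program `Prog` contains no constants and `η` is a homomorphism
from base instance `B` to base instance `B'` (extended homomorphically to ground terms),
then for every stage `i`, `η(Iᵢ) ⊆ I'ᵢ`; hence `η(fix(Prog,B)) ⊆ fix(Prog,B')`. -/
theorem hom_preserves_lfix_of_constFree {P V C F : Type}
    (Prog : Set (FRule P V C F)) (B B' : Set (FFact P C F)) (η : C → C)
    (hconstFree : ∀ r ∈ Prog, ∀ A, (A = r.head ∨ A ∈ r.body) → ∀ t ∈ A.args, ¬ t.HasConst)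
    (hhom : ∀ G ∈ B, G.mapConst η ∈ B') :
    (∀ i : ℕ, ∀ G ∈ fstages Prog B i, G.mapConst η ∈ fstages Prog B' i) ∧
    (∀ G ∈ flfix Prog B, G.mapConst η ∈ flfix Prog B') := by

  have hstage : ∀ i : ℕ, ∀ G ∈ fstages Prog B i, G.mapConst η ∈ fstages Prog B' i := by
    intro i
    induction i with
    | zero => exact hhom
    | succ n ih =>
      intro G hG
      rcases hG with hG | ⟨r, hr, σ, hbody, rfl⟩
      · exact Or.inl (ih G hG)
      · refine Or.inr ⟨r, hr, fun v => (σ v).mapConst η, ?_, ?_⟩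
        · intro A hA
          rw [← atom_subst_mapConst η σ A (hconstFree r hr A (Or.inr hA))]
          exact ih _ (hbody A hA)
        · exact (atom_subst_mapConst η σ r.head (hconstFree r hr r.head (Or.inl rfl)))
  refine ⟨hstage, ?_⟩
  intro G hG
  rcases Set.mem_iUnion.1 hG with ⟨n, hn⟩
  exact Set.mem_iUnion.2 ⟨n, hstage n G hn⟩
end

section
/- The function-symbol elimination transformation defun preserves derivations: let r be a rule whose body contains an atom A with a subterm f(s̄) not nested under another function symbol, and let r' be obtained by replacing that occurrence of f(s̄) in A by a fresh variable z and adding the body atom F_f(s̄, z), where F_f is a fresh predicate; moreover add the rule r'' = (F_f(s̄, f(s̄)) ← body(r)). Then for every instance I and substitution σ with σ(body(r)) ⊆ I: the extension σ' of σ with σ'(z) = σ(f(s̄)) satisfies σ'(body(r')) ⊆ T_{r''}(I), and σ'(head(r')) = σ(head(r)). -/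
theorem subst_update_eq {V C F : Type} [DecidableEq V] (σ : V → GTerm C F) (z : V)
    (g : GTerm C F) : ∀ t : Term V C F, ¬ VarOccurs z t →
      Term.subst (Function.update σ z g) t = Term.subst σ t
  | .var v, h => by
      have hv : v ≠ z := fun hv => h (hv ▸ VarOccurs.var)
      rw [Term.subst, Term.subst, Function.update_of_ne hv]
  | .const c, _ => by rw [Term.subst, Term.subst]
  | .func f ts, h => by
      rw [Term.subst, Term.subst]
      congr 1
      refine List.map_congr_left ?_
      intro t' ht'
      exact subst_update_eq σ z g t'.1 (fun hv => h (VarOccurs.func t'.2 hv))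
  decreasing_by
    have := List.sizeOf_lt_of_mem t'.2
    simp_wf
    omega

theorem atom_subst_update_eq {P V C F : Type} [DecidableEq V] (σ : V → GTerm C F) (z : V)
    (g : GTerm C F) (B : FAtom P V C F) (h : ∀ t ∈ B.args, ¬ VarOccurs z t) :
    B.subst (Function.update σ z g) = B.subst σ := by
  unfold FAtom.subst
  congr 1
  exact List.map_congr_left fun t ht => subst_update_eq σ z g t (h t ht)

/-- the function-symbol elimination transformation `defun` preserves
derivations.  The body atom `A` of `r` has the term `f(s̄)` at (top-level) position `j`;
`r'` replaces that occurrence by the fresh variable `z` and adds the body atom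
`F_f(s̄, z)` for the fresh predicate `Ff`; `r''` derives `F_f(s̄, f(s̄))` from `body r`.
Then for `σ` satisfying `body r` in `I`, the extension `σ'` of `σ` mapping `z` to
`σ(f(s̄))` satisfies `body r'` in `T_{r''}(I)`, and gives the same head instance. -/
theorem defun_preserves_derivations {P V C F : Type} [DecidableEq V]
    (r : FRule P V C F) (A : FAtom P V C F) (L₁ L₂ : List (FAtom P V C F))
    (f : F) (ss : List (Term V C F)) (j : ℕ) (z : V) (Ff : P)
    (hbody : r.body = L₁ ++ A :: L₂)
    (hocc : A.args[j]? = some (Term.func f ss))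
    (hzfresh : ∀ B, (B = r.head ∨ B ∈ r.body) → ∀ t ∈ B.args, ¬ VarOccurs z t)
    (hFffresh : ∀ B, (B = r.head ∨ B ∈ r.body) → B.pred ≠ Ff)
    (r' r'' : FRule P V C F)
    (hr' : r' = ⟨r.head,
      (⟨Ff, ss ++ [Term.var z]⟩ : FAtom P V C F) ::
        (L₁ ++ (⟨A.pred, A.args.set j (Term.var z)⟩ : FAtom P V C F) :: L₂)⟩)
    (hr'' : r'' = ⟨(⟨Ff, ss ++ [Term.func f ss]⟩ : FAtom P V C F), r.body⟩)
    (I : Set (FFact P C F)) (hIFf : ∀ G ∈ I, G.pred ≠ Ff)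
    (σ : V → GTerm C F) (hσ : ∀ B ∈ r.body, B.subst σ ∈ I) :
    (∀ B ∈ r'.body,
        B.subst (Function.update σ z (Term.subst σ (Term.func f ss))) ∈ FTP {r''} I) ∧
    r'.head.subst (Function.update σ z (Term.subst σ (Term.func f ss))) =
      r.head.subst σ := by
  set g := Term.subst σ (Term.func f ss) with hg
  set σ' := Function.update σ z g with hσ'
  have hσ'z : σ' z = g := Function.update_self z g σ
  have hss : ∀ t ∈ ss, ¬ VarOccurs z t := by
    intro t ht hv
    have hA : A ∈ r.body := by rw [hbody]; simp
    have hfj : Term.func f ss ∈ A.args := List.mem_of_getElem? hocc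
    exact hzfresh A (Or.inr hA) _ hfj (VarOccurs.func ht hv)
  have hjlt : j < A.args.length := by obtain ⟨h, _⟩ := List.getElem?_eq_some_iff.mp hocc; exact h
  -- head equality
  have hhead : r'.head.subst σ' = r.head.subst σ := by
    rw [hr']
    exact atom_subst_update_eq σ z g r.head (hzfresh r.head (Or.inl rfl))
  refine ⟨?_, hhead⟩
  intro B hB
  rw [hr'] at hB
  simp only [FRule.body, List.mem_cons, List.mem_append] at hB
  have hbodyeq : ∀ B ∈ r.body, B.subst σ' = B.subst σ := fun B hB =>
    atom_subst_update_eq σ z g B (hzfresh B (Or.inr hB))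
  rcases hB with hB | hB | hB | hB
  · -- the new Ff atom: derived via r''
    subst hB
    refine Or.inr ⟨r'', rfl, σ, ?_, ?_⟩
    · rw [hr'']; exact hσ
    · rw [hr'']
      unfold FAtom.subst
      simp only [List.map_append, List.map_cons, List.map_nil]
      congr 2
      · exact List.map_congr_left fun t ht => subst_update_eq σ z g t (hss t ht)
      · show [Term.subst σ' (Term.var z)] = [Term.subst σ (Term.func f ss)]
        rw [Term.subst, hσ'z, hg]
  · -- B ∈ L₁
    have hBr : B ∈ r.body := by rw [hbody]; simp [hB]
    exact Or.inl (hbodyeq B hBr ▸ hσ B hBr)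
  · -- the modified atom
    subst hB
    left
    have hA : A ∈ r.body := by rw [hbody]; simp
    have key : FAtom.subst σ' ⟨A.pred, A.args.set j (Term.var z)⟩ = A.subst σ := by
      unfold FAtom.subst
      simp only
      congr 1
      have : (A.args.set j (Term.var z)).map (Term.subst σ') =
          (A.args.map (Term.subst σ')).set j (Term.subst σ' (Term.var z)) := by
        simp [List.map_set]
      rw [this]
      rw [Term.subst, hσ'z]
      have hmap : A.args.map (Term.subst σ') = A.args.map (Term.subst σ) :=
        List.map_congr_left fun t ht =>
          subst_update_eq σ z g t (hzfresh A (Or.inr hA) t ht)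
      rw [hmap]
      apply List.ext_getElem?
      intro n
      rw [List.getElem?_set]
      rcases eq_or_ne j n with rfl | hn
      · have : A.args[j]? = some (Term.func f ss) := by
          exact hocc
        have h2 : A.args[j] = Term.func f ss := by
          rw [List.getElem?_eq_getElem hjlt] at this
          exact Option.some.inj this
        simp [List.getElem?_map, this, hjlt, hg, h2]
      · simp [hn]
    rw [key]
    exact hσ A hA
  · -- B ∈ L₂
    have hBr : B ∈ r.body := by rw [hbody]; simp [hB]
    exact Or.inl (hbodyeq B hBr ▸ hσ B hBr)
end
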